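/- For every nonnegative integer n, (-1)^n * Q_0(n) = pod_e(n) - pod_o(n), where Q_0(n) counts partitions of n into distinct parts not congruent to 0 mod 4, and pod_e(n) (resp. pod_o(n)) counts partitions of n into an even (resp. odd) number of parts none of which is congruent to 2 mod 4. -/

import Mathlib

open PowerSeries Finset


/-- `Q0 n`: number of partitions of `n` into distinct parts none divisible by 4. -/
noncomputable def Q0 (n : ℕ) : ℕ :=
  Nat.card {p : n.Partition // p.parts.Nodup ∧ ∀ x ∈ p.parts, ¬ (4 ∣ x)}

/-- `podE n`: partitions of `n` with an even number of parts, no part ≡ 2 (mod 4). -/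
noncomputable def podE (n : ℕ) : ℕ :=
  Nat.card {p : n.Partition // Even (Multiset.card p.parts) ∧ ∀ x ∈ p.parts, x % 4 ≠ 2}

/-- `podO n`: partitions of `n` with an odd number of parts, no part ≡ 2 (mod 4). -/
noncomputable def podO (n : ℕ) : ℕ :=
  Nat.card {p : n.Partition // Odd (Multiset.card p.parts) ∧ ∀ x ∈ p.parts, x % 4 ≠ 2}

noncomputable section AuxPOD
namespace AuxPOD

/-- The power series `∑_j (w j) X^{i·j}`. -/
def wSeries (i : ℕ) (w : ℕ → ℤ) : PowerSeries ℤ :=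
  PowerSeries.mk fun m => if i ∣ m then w (m / i) else 0

/-- The finsupp recording `i ↦ (count of i) * i` for a partition. -/
def partFun {n : ℕ} (p : n.Partition) : ℕ →₀ ℕ :=
  ⟨p.parts.toFinset, fun i => p.parts.count i * i, by
    intro a
    simp only [Multiset.mem_toFinset, ne_eq, mul_eq_zero, Multiset.count_eq_zero, not_or]
    constructor
    · intro ha; exact ⟨by simpa using ha, (p.parts_pos ha).ne'⟩
    · intro ⟨h1, _⟩; simpa using h1⟩

theorem weightedGF (n : ℕ) (s : Finset ℕ) (hs : ∀ i ∈ s, 0 < i) (w : ℕ → ℕ → ℤ) :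
    ∑ p ∈ Finset.univ.filter (fun p : n.Partition => ∀ j ∈ p.parts, j ∈ s),
        ∏ i ∈ s, w i (p.parts.count i)
      = coeff n (∏ i ∈ s, wSeries i (w i)) := by
  rw [coeff_prod]
  simp_rw [wSeries, coeff_mk]
  rw [← Finset.sum_subset (Finset.filter_subset (fun f => ∀ i ∈ s, i ∣ f i) (s.finsuppAntidiag n))
    (fun f _ hf => ?_)]
  swap
  · rw [mem_filter, not_and] at hf
    have : ¬ ∀ i ∈ s, i ∣ f i := by
      intro h; exact (hf (by assumption)) h
    obtain ⟨i, hi, hnd⟩ := by push_neg at this; exact this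
    exact Finset.prod_eq_zero hi (if_neg hnd)
  apply Finset.sum_bij (fun (p : n.Partition) (_ : p ∈ _) => partFun p)
  · -- maps into target
    intro p hp
    rw [mem_filter] at hp ⊢
    have hsub : p.parts.toFinset ⊆ s := fun i hi => hp.2 i (Multiset.mem_toFinset.mp hi)
    refine ⟨Finset.mem_finsuppAntidiag.mpr ⟨?_, ?_⟩, ?_⟩
    · have := Finset.sum_multiset_count_of_subset p.parts s hsub
      rw [p.parts_sum] at this
      simp only [smul_eq_mul] at this
      exact (by simpa [partFun] using this.symm)
    · exact hsub
    · intro i _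
      exact ⟨p.parts.count i, mul_comm _ _⟩
  · -- injective
    intro p₁ hp₁ p₂ hp₂ h
    rw [mem_filter] at hp₁ hp₂
    apply Nat.Partition.ext
    ext i
    by_cases hi : i = 0
    · subst hi
      rw [Multiset.count_eq_zero_of_notMem fun a => (p₁.parts_pos a).false,
        Multiset.count_eq_zero_of_notMem fun a => (p₂.parts_pos a).false]
    · have := congrArg (fun f : ℕ →₀ ℕ => f i) h
      simpa [partFun, Nat.mul_left_inj hi] using this
  · -- surjective
    intro f hf
    rw [mem_filter, Finset.mem_finsuppAntidiag] at hf
    obtain ⟨⟨hsum, hsupp⟩, hdvd⟩ := hf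
    refine ⟨⟨∑ i ∈ s, Multiset.replicate (f i / i) i, ?_, ?_⟩, ?_, ?_⟩
    · intro i hi
      simp only [Multiset.mem_sum] at hi
      obtain ⟨t, ht, z⟩ := hi
      rw [Multiset.eq_of_mem_replicate z]
      exact hs t ht
    · simp_rw [Multiset.sum_sum, Multiset.sum_replicate, Nat.nsmul_eq_mul]
      rw [← hsum]
      exact Finset.sum_congr rfl fun i hi => Nat.div_mul_cancel (hdvd i hi)
    · rw [mem_filter]
      refine ⟨Finset.mem_univ _, ?_⟩
      intro j hj
      simp only [Multiset.mem_sum] at hj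
      obtain ⟨t, ht, z⟩ := hj
      rwa [Multiset.eq_of_mem_replicate z]
    · -- partFun of constructed partition = f
      ext i
      simp only [partFun, Finsupp.coe_mk]
      simp_rw [Multiset.count_sum', Multiset.count_replicate, Finset.sum_ite_eq']
      split_ifs with h
      · exact Nat.div_mul_cancel (hdvd i h)
      · rw [zero_mul]
        exact (Finsupp.notMem_support_iff.mp fun hmem => h (hsupp hmem)).symm
  · -- equal terms
    intro p hp
    rw [mem_filter] at hp
    apply Finset.prod_congr rfl
    intro i hi
    have h1 : (partFun p) i = p.parts.count i * i := rfl
    rw [h1]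
    split_ifs with hd
    · rw [Nat.mul_div_cancel _ (hs i hi)]
    · exact absurd ⟨p.parts.count i, mul_comm _ _⟩ hd



theorem mul_wSeries (i : ℕ) (hi : 0 < i) :
    ((1 + X ^ i) * wSeries i fun j => (-1) ^ j : PowerSeries ℤ) = 1 := by
  ext m
  rw [add_mul, one_mul, map_add, mul_comm ((X : PowerSeries ℤ) ^ i), coeff_mul_X_pow']
  simp only [wSeries, coeff_mk, coeff_one]
  rcases Nat.eq_zero_or_pos m with rfl | hm
  · simp [Nat.le_zero, hi.ne']
  · by_cases hd : i ∣ m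
    · obtain ⟨c, rfl⟩ := hd
      have hc : 0 < c := by
        rcases Nat.eq_zero_or_pos c with rfl | h
        · simp at hm
        · exact h
      have hile : i ≤ i * c := Nat.le_mul_of_pos_right _ hc
      obtain ⟨d, rfl⟩ : ∃ d, c = d + 1 := ⟨c - 1, (Nat.succ_pred_eq_of_pos hc).symm⟩
      have hsub : i * (d + 1) - i = i * (d + 1 - 1) := by simp [Nat.mul_succ]
      have hdd : i ∣ i * (d + 1) - i := ⟨d + 1 - 1, hsub⟩
      rw [if_pos ⟨d + 1, rfl⟩, if_pos hile, if_pos hdd,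
        hsub, Nat.mul_div_cancel_left _ hi, Nat.mul_div_cancel_left _ hi, if_neg hm.ne']
      simp [pow_succ]
    · rw [if_neg hd, if_neg hm.ne']
      by_cases hle : i ≤ m
      · rw [if_pos hle, if_neg]
        · ring
        · intro hdd
          exact hd (by simpa [Nat.sub_add_cancel hle] using Nat.dvd_add hdd (dvd_refl i))
      · rw [if_neg hle]; ring

theorem wSeries_q0 (i : ℕ) (hi : 0 < i) :
    wSeries i (fun j => if j = 0 then 1 else if j = 1 then (-1) ^ i else 0)
      = 1 + PowerSeries.C ((-1) ^ i) * X ^ i := by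
  ext m
  simp only [wSeries, coeff_mk, map_add, coeff_one, coeff_C_mul, coeff_X_pow]
  by_cases hd : i ∣ m
  · obtain ⟨c, rfl⟩ := hd
    rw [if_pos ⟨c, rfl⟩, Nat.mul_div_cancel_left _ hi]
    match c with
    | 0 => simp [hi.ne', Ne.symm hi.ne']
    | 1 => simp [hi.ne']
    | (c + 2) =>
      have h1 : i * (c + 2) ≠ 0 := by positivity
      have h2 : i * (c + 2) ≠ i := by nlinarith
      simp [h1, h2]
  · have hm0 : m ≠ 0 := fun h => hd (h ▸ dvd_zero i)
    have hmi : m ≠ i := fun h => hd (h ▸ dvd_refl i)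
    simp [hd, hm0, hmi]



def Fk (n k : ℕ) : Finset ℕ := (Finset.Icc 1 n).filter fun i => 2 ^ k ∣ i ∧ ¬ 2 ^ (k + 1) ∣ i
def Gk (n k : ℕ) : Finset ℕ := (Finset.Icc 1 n).filter fun i => 2 ^ (k + 1) ∣ i

def Uk (n k : ℕ) : PowerSeries ℤ :=
  (∏ i ∈ Fk n k, (1 - X ^ (2 * i))) * ∏ i ∈ Gk n k, (1 + X ^ i)

theorem dvd_sub_mul {N : ℕ} {a b c : PowerSeries ℤ} (h : (X : PowerSeries ℤ) ^ N ∣ a - b) :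
    (X : PowerSeries ℤ) ^ N ∣ a * c - b * c := by
  have : a * c - b * c = (a - b) * c := by ring
  rw [this]; exact h.mul_right c

theorem prod_cong {N : ℕ} {s : Finset ℕ} {f g : ℕ → PowerSeries ℤ}
    (h : ∀ i ∈ s, (X : PowerSeries ℤ) ^ N ∣ f i - g i) :
    (X : PowerSeries ℤ) ^ N ∣ (∏ i ∈ s, f i) - ∏ i ∈ s, g i := by
  classical
  induction s using Finset.induction with
  | empty => simp
  | @insert a s ha ih =>
    rw [Finset.prod_insert ha, Finset.prod_insert ha]
    have key : f a * ∏ i ∈ s, f i - g a * ∏ i ∈ s, g i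
        = f a * ((∏ i ∈ s, f i) - ∏ i ∈ s, g i) + (f a - g a) * ∏ i ∈ s, g i := by ring
    rw [key]
    exact dvd_add ((ih fun i hi => h i (mem_insert_of_mem hi)).mul_left _)
      ((h a (mem_insert_self _ _)).mul_right _)

theorem Uk_step (n k : ℕ) : (X : PowerSeries ℤ) ^ (n + 1) ∣ Uk n k - Uk n (k + 1) := by
  classical
  -- split Gk n k
  have hsplit : (∏ i ∈ Gk n k, (1 + (X : PowerSeries ℤ) ^ i))
      = (∏ i ∈ Fk n (k + 1), (1 + X ^ i)) * ∏ i ∈ Gk n (k + 1), (1 + X ^ i) := by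
    have h1 : Fk n (k + 1) = (Gk n k).filter fun i => ¬ 2 ^ (k + 2) ∣ i := by
      ext i
      simp only [Fk, Gk, mem_filter, mem_Icc]
      tauto
    have h2 : Gk n (k + 1) = (Gk n k).filter fun i => 2 ^ (k + 2) ∣ i := by
      ext i
      simp only [Fk, Gk, mem_filter, mem_Icc]
      constructor
      · intro ⟨h, hd⟩
        exact ⟨⟨h, dvd_trans (pow_dvd_pow 2 (by omega)) hd⟩, hd⟩
      · tauto
    rw [h1, h2, mul_comm, Finset.prod_filter_mul_prod_filter_not]
  -- truncate small factors
  set F' : Finset ℕ := (Fk n k).filter (fun i => 2 * i ≤ n) with hF'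
  have htrunc : (X : PowerSeries ℤ) ^ (n + 1) ∣
      (∏ i ∈ Fk n k, (1 - X ^ (2 * i))) - ∏ i ∈ F', (1 - X ^ (2 * i)) := by
    have : (∏ i ∈ F', (1 - (X : PowerSeries ℤ) ^ (2 * i)))
        = ∏ i ∈ Fk n k, (if 2 * i ≤ n then 1 - X ^ (2 * i) else 1) :=
      Finset.prod_filter _ _
    rw [this]
    apply prod_cong
    intro i _
    split_ifs with hle
    · simp
    · have : (1 - (X : PowerSeries ℤ) ^ (2 * i)) - 1 = -(X ^ (2 * i)) := by ring
      rw [this, dvd_neg]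
      exact pow_dvd_pow X (by omega)
  -- reindex
  have himg : Fk n (k + 1) = F'.image (fun i => 2 * i) := by
    ext j
    simp only [hF', Fk, mem_image, mem_filter, mem_Icc]
    constructor
    · rintro ⟨⟨hj1, hjn⟩, hd1, hd2⟩
      have h2j : 2 ∣ j := dvd_trans (dvd_pow_self 2 (Nat.succ_ne_zero k)) hd1
      obtain ⟨i, rfl⟩ := h2j
      refine ⟨i, ⟨⟨⟨by omega, by omega⟩, ?_, ?_⟩, by omega⟩, rfl⟩
      · have := hd1
        rw [pow_succ, mul_comm (2 ^ k) 2] at this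
        exact (mul_dvd_mul_iff_left (by norm_num : (2:ℕ) ≠ 0)).mp this
      · intro hc
        apply hd2
        have h22 : (2:ℕ) ^ (k + 1 + 1) = 2 * 2 ^ (k + 1) := by ring
        rw [h22]
        exact mul_dvd_mul_left 2 hc
    · rintro ⟨i, ⟨⟨⟨hi1, hin⟩, hd1, hd2⟩, hle⟩, rfl⟩
      refine ⟨⟨by omega, by omega⟩, ?_, ?_⟩
      · rw [pow_succ, mul_comm (2 ^ k) 2]
        exact mul_dvd_mul_left 2 hd1
      · intro hc
        apply hd2
        have h22 : (2:ℕ) ^ (k + 1 + 1) = 2 * 2 ^ (k + 1) := by ring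
        rw [h22] at hc
        exact (mul_dvd_mul_iff_left (by norm_num : (2:ℕ) ≠ 0)).mp hc
  have hreidx : (∏ i ∈ F', (1 - (X : PowerSeries ℤ) ^ (2 * i)))
      = ∏ j ∈ Fk n (k + 1), (1 - X ^ j) := by
    rw [himg, Finset.prod_image]
    intro a _ b _ h
    simp only at h
    omega
  -- combine the two Fk (k+1) products
  have hcomb : (∏ j ∈ Fk n (k + 1), (1 - (X : PowerSeries ℤ) ^ j)) *
      ∏ j ∈ Fk n (k + 1), (1 + X ^ j) = ∏ j ∈ Fk n (k + 1), (1 - X ^ (2 * j)) := by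
    rw [← Finset.prod_mul_distrib]
    apply Finset.prod_congr rfl
    intro j _
    rw [two_mul, pow_add]
    ring
  -- put it together
  rw [Uk, Uk, hsplit]
  have expand : (∏ i ∈ Fk n k, (1 - (X : PowerSeries ℤ) ^ (2 * i))) *
        ((∏ i ∈ Fk n (k + 1), (1 + X ^ i)) * ∏ i ∈ Gk n (k + 1), (1 + X ^ i)) -
      (∏ i ∈ Fk n (k + 1), (1 - X ^ (2 * i))) * ∏ i ∈ Gk n (k + 1), (1 + X ^ i)
      = ((∏ i ∈ Fk n k, (1 - X ^ (2 * i))) - ∏ i ∈ F', (1 - X ^ (2 * i))) *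
          ((∏ i ∈ Fk n (k + 1), (1 + X ^ i)) * ∏ i ∈ Gk n (k + 1), (1 + X ^ i)) := by
    rw [← hcomb, ← hreidx]
    ring
  rw [expand]
  exact htrunc.mul_right _

theorem Uk_last (n : ℕ) : Uk n (n + 1) = 1 := by
  have hF : Fk n (n + 1) = ∅ := by
    apply Finset.filter_false_of_mem
    rintro i hi ⟨hd, -⟩
    rw [mem_Icc] at hi
    have h1 : 2 ^ (n + 1) ≤ i := Nat.le_of_dvd (by omega) hd
    have h2 : n < 2 ^ (n + 1) := lt_of_lt_of_le (Nat.lt_two_pow_self (n := n)) (pow_le_pow_right₀ one_le_two (by omega))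
    omega
  have hG : Gk n (n + 1) = ∅ := by
    apply Finset.filter_false_of_mem
    intro i hi hd
    rw [mem_Icc] at hi
    have h1 : 2 ^ (n + 2) ≤ i := Nat.le_of_dvd (by omega) hd
    have h2 : n < 2 ^ (n + 2) := lt_of_lt_of_le (Nat.lt_two_pow_self (n := n)) (pow_le_pow_right₀ one_le_two (by omega))
    omega
  rw [Uk, hF, hG]
  simp

theorem Uk_cong_one (n : ℕ) : (X : PowerSeries ℤ) ^ (n + 1) ∣ Uk n 0 - 1 := by
  have h : ∀ K, (X : PowerSeries ℤ) ^ (n + 1) ∣ Uk n 0 - Uk n K := by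
    intro K
    induction K with
    | zero => simp
    | succ k ih =>
      have : Uk n 0 - Uk n (k + 1) = (Uk n 0 - Uk n k) + (Uk n k - Uk n (k + 1)) := by ring
      rw [this]
      exact dvd_add ih (Uk_step n k)
  have := h (n + 1)
  rwa [Uk_last] at this


def sA (n : ℕ) : Finset ℕ := (Finset.Icc 1 n).filter fun i => ¬ 4 ∣ i
def sB (n : ℕ) : Finset ℕ := (Finset.Icc 1 n).filter fun i => i % 4 ≠ 2

theorem PQ_eq (n : ℕ) :
    (∏ i ∈ sA n, (1 + PowerSeries.C ((-1) ^ i) * X ^ i)) * (∏ i ∈ sB n, (1 + X ^ i))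
      = Uk n 0 := by
  classical
  set O : Finset ℕ := (Finset.Icc 1 n).filter fun i => ¬ 2 ∣ i with hO
  set E2 : Finset ℕ := (Finset.Icc 1 n).filter fun i => 2 ∣ i ∧ ¬ 4 ∣ i with hE2
  set E4 : Finset ℕ := (Finset.Icc 1 n).filter fun i => 4 ∣ i with hE4
  have hA : (∏ i ∈ sA n, (1 + PowerSeries.C ((-1) ^ i) * X ^ i))
      = (∏ i ∈ O, (1 - (X : PowerSeries ℤ) ^ i)) * ∏ i ∈ E2, (1 + (X : PowerSeries ℤ) ^ i) := by
    rw [← Finset.prod_filter_mul_prod_filter_not (sA n) (fun i => 2 ∣ i)]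
    have e1 : (sA n).filter (fun i => 2 ∣ i) = E2 := by
      rw [sA, hE2, Finset.filter_filter]
      exact Finset.filter_congr fun i _ => by omega
    have e2 : (sA n).filter (fun i => ¬ 2 ∣ i) = O := by
      rw [sA, hO, Finset.filter_filter]
      exact Finset.filter_congr fun i _ => by omega
    rw [e1, e2, mul_comm]
    congr 1
    · apply Finset.prod_congr rfl
      intro i hi
      rw [hO, Finset.mem_filter] at hi
      have hodd : Odd i := Nat.odd_iff.mpr (by omega)
      rw [hodd.neg_one_pow, map_neg, map_one, neg_one_mul, ← sub_eq_add_neg]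
    · apply Finset.prod_congr rfl
      intro i hi
      rw [hE2, Finset.mem_filter] at hi
      have heven : Even i := by
        obtain ⟨c, hc⟩ := hi.2.1; exact ⟨c, by omega⟩
      rw [heven.neg_one_pow, map_one, one_mul]
  have hB : (∏ i ∈ sB n, (1 + (X : PowerSeries ℤ) ^ i))
      = (∏ i ∈ O, (1 + (X : PowerSeries ℤ) ^ i)) * ∏ i ∈ E4, (1 + (X : PowerSeries ℤ) ^ i) := by
    rw [← Finset.prod_filter_mul_prod_filter_not (sB n) (fun i => 2 ∣ i)]
    have e1 : (sB n).filter (fun i => 2 ∣ i) = E4 := by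
      rw [sB, hE4, Finset.filter_filter]
      exact Finset.filter_congr fun i _ => by omega
    have e2 : (sB n).filter (fun i => ¬ 2 ∣ i) = O := by
      rw [sB, hO, Finset.filter_filter]
      exact Finset.filter_congr fun i _ => by omega
    rw [e1, e2, mul_comm]
  have hpow1 : (2 : ℕ) ^ (0 + 1) = 2 := by norm_num
  have hpow0 : (2 : ℕ) ^ 0 = 1 := by norm_num
  have hF0 : Fk n 0 = O := by
    rw [Fk, hO, hpow1, hpow0]
    exact Finset.filter_congr fun i _ => by omega
  have hG0 : (∏ i ∈ E2, (1 + (X : PowerSeries ℤ) ^ i)) * ∏ i ∈ E4, (1 + (X : PowerSeries ℤ) ^ i)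
      = ∏ i ∈ Gk n 0, (1 + (X : PowerSeries ℤ) ^ i) := by
    rw [← Finset.prod_filter_mul_prod_filter_not (Gk n 0) (fun i => 4 ∣ i), mul_comm]
    have e1 : (Gk n 0).filter (fun i => 4 ∣ i) = E4 := by
      rw [Gk, hE4, hpow1, Finset.filter_filter]
      exact Finset.filter_congr fun i _ => by omega
    have e2 : (Gk n 0).filter (fun i => ¬ 4 ∣ i) = E2 := by
      rw [Gk, hE2, hpow1, Finset.filter_filter]
    rw [e1, e2]
  have hOO : (∏ i ∈ O, (1 - (X : PowerSeries ℤ) ^ i)) * ∏ i ∈ O, (1 + (X : PowerSeries ℤ) ^ i)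
      = ∏ i ∈ Fk n 0, (1 - (X : PowerSeries ℤ) ^ (2 * i)) := by
    rw [hF0, ← Finset.prod_mul_distrib]
    apply Finset.prod_congr rfl
    intro i _
    rw [two_mul, pow_add]
    ring
  rw [hA, hB, Uk, ← hOO, ← hG0]
  ring

theorem coeff_key (n : ℕ) :
    (coeff n) (∏ i ∈ sB n, wSeries i fun j => (-1) ^ j)
      = (coeff n) (∏ i ∈ sA n, (1 + PowerSeries.C ((-1) ^ i) * X ^ i)) := by
  classical
  set P := ∏ i ∈ sA n, (1 + PowerSeries.C ((-1) ^ i) * X ^ i) with hP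
  set Q := ∏ i ∈ sB n, (1 + (X : PowerSeries ℤ) ^ i) with hQdef
  set S := ∏ i ∈ sB n, wSeries i fun j => (-1) ^ j with hS
  have hQS : Q * S = 1 := by
    rw [hQdef, hS, ← Finset.prod_mul_distrib]
    rw [Finset.prod_congr rfl fun i hi => mul_wSeries i ?_]
    · exact Finset.prod_const_one
    · rw [sB, Finset.mem_filter, Finset.mem_Icc] at hi
      omega
  have hdvd : (X : PowerSeries ℤ) ^ (n + 1) ∣ P - S := by
    have h1 : (X : PowerSeries ℤ) ^ (n + 1) ∣ P * Q - 1 := by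
      rw [hP, hQdef, PQ_eq]; exact Uk_cong_one n
    have h2 : P - S = (P * Q - 1) * S := by
      rw [sub_mul, one_mul, mul_assoc, hQS, mul_one]
    rw [h2]
    exact h1.mul_right S
  have hc := (PowerSeries.X_pow_dvd_iff.mp hdvd) n (Nat.lt_succ_self n)
  rw [map_sub, sub_eq_zero] at hc
  exact hc.symm

theorem mem_Icc_of_mem_parts {n : ℕ} (p : n.Partition) {x : ℕ} (hx : x ∈ p.parts) :
    x ∈ Finset.Icc 1 n := by
  rw [Finset.mem_Icc]
  refine ⟨p.parts_pos hx, ?_⟩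
  have := Multiset.single_le_sum (fun y _ => Nat.zero_le y) x hx
  rwa [p.parts_sum] at this

theorem natCard_filter {α : Type*} [Fintype α] (P : α → Prop) [DecidablePred P] :
    Nat.card {x : α // P x} = (Finset.univ.filter P).card := by
  rw [Nat.card_eq_fintype_card, Fintype.card_subtype]

theorem sumA (n : ℕ) :
    ∑ p ∈ Finset.univ.filter (fun p : n.Partition => ∀ j ∈ p.parts, j ∈ sA n),
        ∏ i ∈ sA n,
          (fun (i j : ℕ) => if j = 0 then (1 : ℤ) else if j = 1 then (-1) ^ i else 0) i
            (p.parts.count i)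
      = (-1) ^ n * Q0 n := by
  classical
  set T := Finset.univ.filter (fun p : n.Partition => ∀ j ∈ p.parts, j ∈ sA n) with hT
  set T0 := Finset.univ.filter
    (fun p : n.Partition => (∀ j ∈ p.parts, j ∈ sA n) ∧ p.parts.Nodup) with hT0
  have hsub : T0 ⊆ T := by
    intro p hp
    rw [hT0, Finset.mem_filter] at hp
    rw [hT, Finset.mem_filter]
    exact ⟨hp.1, hp.2.1⟩
  rw [← Finset.sum_subset hsub (fun p hp hnp => ?_)]
  swap
  · -- non-nodup terms vanish
    rw [hT, Finset.mem_filter] at hp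
    rw [hT0, Finset.mem_filter] at hnp
    have hnd : ¬ p.parts.Nodup := fun h => hnp ⟨Finset.mem_univ _, hp.2, h⟩
    rw [Multiset.nodup_iff_count_le_one] at hnd
    push_neg at hnd
    obtain ⟨i, hi⟩ := hnd
    have himem : i ∈ p.parts := by
      rw [← Multiset.count_pos]; omega
    refine Finset.prod_eq_zero (hp.2 i himem) ?_
    have h0 : p.parts.count i ≠ 0 := by omega
    have h1 : p.parts.count i ≠ 1 := by omega
    simp only [h0, h1, if_false]
  · have hterm : ∀ p ∈ T0, (∏ i ∈ sA n,
        (fun (i j : ℕ) => if j = 0 then (1 : ℤ) else if j = 1 then (-1) ^ i else 0) i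
          (p.parts.count i)) = (-1) ^ n := by
      intro p hp
      rw [hT0, Finset.mem_filter] at hp
      obtain ⟨-, hmem, hnd⟩ := hp
      have h1 : ∀ i ∈ sA n,
          ((fun (i j : ℕ) => if j = 0 then (1 : ℤ) else if j = 1 then (-1) ^ i else 0) i
            (p.parts.count i)) = if i ∈ p.parts then (-1 : ℤ) ^ i else 1 := by
        intro i _
        rw [Multiset.count_eq_of_nodup hnd]
        split_ifs with h <;> simp
      rw [Finset.prod_congr rfl h1, ← Finset.prod_filter, Finset.prod_pow_eq_pow_sum]
      congr 1
      -- sum of the parts is n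
      have h2 := Finset.sum_multiset_count_of_subset p.parts (sA n)
        (fun i hi => hmem i (Multiset.mem_toFinset.mp hi))
      rw [p.parts_sum] at h2
      rw [Finset.sum_filter]
      refine Eq.trans (Finset.sum_congr rfl fun i _ => ?_) h2.symm
      rw [Multiset.count_eq_of_nodup hnd]
      split_ifs <;> simp
    rw [Finset.sum_congr rfl hterm, Finset.sum_const, nsmul_eq_mul, mul_comm]
    congr 1
    have hQ : Q0 n = T0.card := by
      rw [Q0, natCard_filter]
      congr 1
      rw [hT0]
      apply Finset.filter_congr
      intro p _
      constructor
      · rintro ⟨hnd, h4⟩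
        refine ⟨fun j hj => ?_, hnd⟩
        rw [sA, Finset.mem_filter]
        exact ⟨mem_Icc_of_mem_parts p hj, h4 j hj⟩
      · rintro ⟨hmem, hnd⟩
        refine ⟨hnd, fun x hx => ?_⟩
        have := hmem x hx
        rw [sA, Finset.mem_filter] at this
        exact this.2
    rw [hQ]

theorem sumB (n : ℕ) :
    ∑ p ∈ Finset.univ.filter (fun p : n.Partition => ∀ j ∈ p.parts, j ∈ sB n),
        ∏ i ∈ sB n, (fun (_ j : ℕ) => ((-1 : ℤ)) ^ j) i (p.parts.count i)
      = (podE n : ℤ) - podO n := by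
  classical
  set T := Finset.univ.filter (fun p : n.Partition => ∀ j ∈ p.parts, j ∈ sB n) with hT
  have hterm : ∀ p ∈ T, (∏ i ∈ sB n, ((-1 : ℤ)) ^ (p.parts.count i))
      = (-1 : ℤ) ^ (Multiset.card p.parts) := by
    intro p hp
    rw [hT, Finset.mem_filter] at hp
    rw [Finset.prod_pow_eq_pow_sum]
    congr 1
    have hsub : p.parts.toFinset ⊆ sB n := fun i hi => hp.2 i (Multiset.mem_toFinset.mp hi)
    have := Finset.sum_subset hsub (fun i _ hni =>
      Multiset.count_eq_zero_of_notMem (fun h => hni (Multiset.mem_toFinset.mpr h)))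
    rw [← this, Multiset.toFinset_sum_count_eq]
  rw [Finset.sum_congr rfl hterm,
    ← Finset.sum_filter_add_sum_filter_not T (fun p => Even (Multiset.card p.parts))]
  have hE : ∑ p ∈ T.filter (fun p => Even (Multiset.card p.parts)),
      (-1 : ℤ) ^ (Multiset.card p.parts)
      = ((T.filter (fun p => Even (Multiset.card p.parts))).card : ℤ) := by
    rw [Finset.sum_congr rfl (fun p hp => Even.neg_one_pow (Finset.mem_filter.mp hp).2),
      Finset.sum_const, nsmul_eq_mul, mul_one]
  have hO : ∑ p ∈ T.filter (fun p => ¬ Even (Multiset.card p.parts)),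
      (-1 : ℤ) ^ (Multiset.card p.parts)
      = -((T.filter (fun p => ¬ Even (Multiset.card p.parts))).card : ℤ) := by
    rw [Finset.sum_congr rfl
      (fun p hp => Odd.neg_one_pow (Nat.not_even_iff_odd.mp (Finset.mem_filter.mp hp).2)),
      Finset.sum_const, nsmul_eq_mul, mul_neg_one]
  rw [hE, hO]
  have hpE : podE n = (T.filter (fun p => Even (Multiset.card p.parts))).card := by
    rw [podE, natCard_filter]
    congr 1
    rw [hT, Finset.filter_filter]
    apply Finset.filter_congr
    intro p _
    constructor
    · rintro ⟨hev, h4⟩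
      refine ⟨fun j hj => ?_, hev⟩
      rw [sB, Finset.mem_filter]
      exact ⟨mem_Icc_of_mem_parts p hj, h4 j hj⟩
    · rintro ⟨hmem, hev⟩
      refine ⟨hev, fun x hx => ?_⟩
      have := hmem x hx
      rw [sB, Finset.mem_filter] at this
      exact this.2
  have hpO : podO n = (T.filter (fun p => ¬ Even (Multiset.card p.parts))).card := by
    rw [podO, natCard_filter]
    congr 1
    rw [hT, Finset.filter_filter]
    apply Finset.filter_congr
    intro p _
    constructor
    · rintro ⟨hodd, h4⟩
      refine ⟨fun j hj => ?_, Nat.not_even_iff_odd.mpr hodd⟩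
      rw [sB, Finset.mem_filter]
      exact ⟨mem_Icc_of_mem_parts p hj, h4 j hj⟩
    · rintro ⟨hmem, hev⟩
      refine ⟨Nat.not_even_iff_odd.mp hev, fun x hx => ?_⟩
      have := hmem x hx
      rw [sB, Finset.mem_filter] at this
      exact this.2
  rw [hpE, hpO]
  ring

end AuxPOD
end AuxPOD

open AuxPOD in
theorem stmt_0 (n : ℕ) : (-1 : ℤ) ^ n * Q0 n = (podE n : ℤ) - podO n := by
  have h1 := sumA n
  have h2 := weightedGF n (sA n) (fun i hi => by
    rw [sA, Finset.mem_filter, Finset.mem_Icc] at hi; omega)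
    (fun (i j : ℕ) => if j = 0 then (1 : ℤ) else if j = 1 then (-1) ^ i else 0)
  have h3 := weightedGF n (sB n) (fun i hi => by
    rw [sB, Finset.mem_filter, Finset.mem_Icc] at hi; omega)
    (fun (_ j : ℕ) => ((-1 : ℤ)) ^ j)
  have h4 := sumB n
  have h5 := coeff_key n
  have h6 := h1.symm.trans h2
  have h7 := h3.symm.trans h4
  have h8 : (coeff n) (∏ i ∈ sA n, wSeries i
      ((fun (i j : ℕ) => if j = 0 then (1 : ℤ) else if j = 1 then (-1) ^ i else 0) i))
      = (coeff n) (∏ i ∈ sA n, (1 + PowerSeries.C ((-1) ^ i) * X ^ i)) := by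
    congr 1
    refine Finset.prod_congr rfl fun i hi => wSeries_q0 i ?_
    rw [sA, Finset.mem_filter, Finset.mem_Icc] at hi; omega
  exact h6.trans (h8.trans (h5.symm.trans h7))
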